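/- The EJM basis is the orbit of its first state under the group G^{(2)}_tetra = ⟨X⊗X, Z⊗Z⟩ up to global phases: for each of the four operators U ∈ {I⊗I, X⊗X, Z⊗Z, (XZ)⊗(XZ)} there exist an index i ∈ {1,2,3,4} and a complex number ω with |ω| = 1 such that U ψ_1 = ω ψ_i, and the resulting map U ↦ i is a bijection onto {1,2,3,4}. -/

import Mathlib

open Matrix Complex Kronecker

noncomputable section

def X2 : Matrix (Fin 2) (Fin 2) ℂ := !![0, 1; 1, 0]
def Y2 : Matrix (Fin 2) (Fin 2) ℂ := !![0, -Complex.I; Complex.I, 0]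
def Z2 : Matrix (Fin 2) (Fin 2) ℂ := !![1, 0; 0, -1]

/-- The tetrahedral Bloch vectors `m₁, m₂, m₃, m₄` (0-indexed). -/
def mtet : Fin 4 → Fin 3 → ℝ := fun i j =>
  (![![1, 1, 1], ![1, -1, -1], ![-1, 1, -1], ![-1, -1, 1]] : Fin 4 → Fin 3 → ℝ) i j /
    Real.sqrt 3

def bTheta (m : Fin 3 → ℝ) : ℝ := Real.arccos (m 2)
def bPhi (m : Fin 3 → ℝ) : ℝ := Complex.arg ((m 0 : ℂ) + (m 1 : ℂ) * Complex.I)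

/-- `|m⟩ = cos(θ/2)|0⟩ + sin(θ/2) e^{iφ} |1⟩`. -/
def ketP (m : Fin 3 → ℝ) : Fin 2 → ℂ :=
  ![(Real.cos (bTheta m / 2) : ℂ),
    (Real.sin (bTheta m / 2) : ℂ) * Complex.exp ((bPhi m : ℂ) * Complex.I)]

/-- `|−m⟩ = sin(θ/2)|0⟩ − cos(θ/2) e^{iφ} |1⟩`. -/
def ketM (m : Fin 3 → ℝ) : Fin 2 → ℂ :=
  ![(Real.sin (bTheta m / 2) : ℂ),
    -((Real.cos (bTheta m / 2) : ℂ)) * Complex.exp ((bPhi m : ℂ) * Complex.I)]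

/-- Tensor product of two qubit vectors. -/
def tp (u w : Fin 2 → ℂ) : Fin 2 × Fin 2 → ℂ := fun p => u p.1 * w p.2

/-- The EJM basis states `ψ_1, …, ψ_4` (0-indexed). -/
def ψEJM (i : Fin 4) : Fin 2 × Fin 2 → ℂ :=
  (((Real.sqrt 3 + 1) / (2 * Real.sqrt 2) : ℝ) : ℂ) • tp (ketP (mtet i)) (ketM (mtet i)) +
    (((Real.sqrt 3 - 1) / (2 * Real.sqrt 2) : ℝ) : ℂ) • tp (ketM (mtet i)) (ketP (mtet i))

/-- Inner product on `ℂ² ⊗ ℂ²` (conjugate-linear in the first argument). -/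
def ip2 (v w : Fin 2 × Fin 2 → ℂ) : ℂ := ∑ p, star (v p) * w p

/-- `m·σ = m_x X + m_y Y + m_z Z`. -/
def mDotSigma (m : Fin 3 → ℝ) : Matrix (Fin 2) (Fin 2) ℂ :=
  (m 0 : ℂ) • X2 + (m 1 : ℂ) • Y2 + (m 2 : ℂ) • Z2

end

noncomputable section

/-- The four elements `I⊗I, X⊗X, Z⊗Z, (XZ)⊗(XZ)` of `G⁽²⁾_tetra = ⟨X⊗X, Z⊗Z⟩`. -/
def Gtetra2elt : Fin 4 → Matrix (Fin 2 × Fin 2) (Fin 2 × Fin 2) ℂ :=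
  ![(1 : Matrix (Fin 2) (Fin 2) ℂ) ⊗ₖ (1 : Matrix (Fin 2) (Fin 2) ℂ),
    X2 ⊗ₖ X2, Z2 ⊗ₖ Z2, (X2 * Z2) ⊗ₖ (X2 * Z2)]


lemma exp_arg_mul_I' (z : ℂ) (hz : z ≠ 0) :
    Complex.exp ((z.arg : ℂ) * Complex.I) = z / (‖z‖ : ℂ) := by
  have h := Complex.norm_mul_exp_arg_mul_I z
  rw [eq_div_iff (by exact_mod_cast norm_ne_zero_iff.mpr hz), mul_comm]
  exact h

lemma hE0 : Complex.exp ((bPhi (mtet 0) : ℂ) * Complex.I)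
    = (1 + Complex.I) / (Real.sqrt 2 : ℝ) := by
  unfold bPhi
  rw [show ((mtet 0 0 : ℝ) : ℂ) + (mtet 0 1 : ℂ) * Complex.I
      = ((Real.sqrt 3)⁻¹ : ℝ) * (1 + Complex.I) by norm_num [mtet, Matrix.cons_val_two, Matrix.cons_val_three, Matrix.tail_cons, Matrix.vecHead, Matrix.vecTail]; push_cast; ring,
    Complex.arg_real_mul _ (by positivity),
    exp_arg_mul_I' _ (by simp [Complex.ext_iff]),
    show ‖(1 + Complex.I)‖ = Real.sqrt 2 by
      rw [Complex.norm_def, Complex.normSq_apply]; norm_num]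

lemma hE1' : Complex.exp ((bPhi (mtet 1) : ℂ) * Complex.I)
    = -Complex.I * Complex.exp ((bPhi (mtet 0) : ℂ) * Complex.I) := by
  rw [hE0]
  conv_lhs => rw [show bPhi (mtet 1) = Complex.arg ((mtet 1 0 : ℂ) + (mtet 1 1 : ℂ) * Complex.I) from rfl]
  rw [show ((mtet 1 0 : ℝ) : ℂ) + (mtet 1 1 : ℂ) * Complex.I
      = ((Real.sqrt 3)⁻¹ : ℝ) * (1 - Complex.I) by norm_num [mtet, Matrix.cons_val_two, Matrix.cons_val_three, Matrix.tail_cons, Matrix.vecHead, Matrix.vecTail]; push_cast; ring,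
    Complex.arg_real_mul _ (by positivity),
    exp_arg_mul_I' _ (by simp [Complex.ext_iff]),
    show ‖(1 - Complex.I)‖ = Real.sqrt 2 by
      rw [Complex.norm_def, Complex.normSq_apply]; norm_num]
  linear_combination (((Real.sqrt 2 : ℝ) : ℂ))⁻¹ * Complex.I_sq

lemma hE2' : Complex.exp ((bPhi (mtet 2) : ℂ) * Complex.I)
    = Complex.I * Complex.exp ((bPhi (mtet 0) : ℂ) * Complex.I) := by
  rw [hE0]
  conv_lhs => rw [show bPhi (mtet 2) = Complex.arg ((mtet 2 0 : ℂ) + (mtet 2 1 : ℂ) * Complex.I) from rfl]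
  rw [show ((mtet 2 0 : ℝ) : ℂ) + (mtet 2 1 : ℂ) * Complex.I
      = ((Real.sqrt 3)⁻¹ : ℝ) * (-1 + Complex.I) by norm_num [mtet, Matrix.cons_val_two, Matrix.cons_val_three, Matrix.tail_cons, Matrix.vecHead, Matrix.vecTail]; push_cast; ring,
    Complex.arg_real_mul _ (by positivity),
    exp_arg_mul_I' _ (by simp [Complex.ext_iff]),
    show ‖(-1 + Complex.I)‖ = Real.sqrt 2 by
      rw [Complex.norm_def, Complex.normSq_apply]; norm_num]
  linear_combination (-((Real.sqrt 2 : ℝ) : ℂ)⁻¹) * Complex.I_sq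

lemma hE3' : Complex.exp ((bPhi (mtet 3) : ℂ) * Complex.I)
    = -Complex.exp ((bPhi (mtet 0) : ℂ) * Complex.I) := by
  rw [hE0]
  conv_lhs => rw [show bPhi (mtet 3) = Complex.arg ((mtet 3 0 : ℂ) + (mtet 3 1 : ℂ) * Complex.I) from rfl]
  rw [show ((mtet 3 0 : ℝ) : ℂ) + (mtet 3 1 : ℂ) * Complex.I
      = ((Real.sqrt 3)⁻¹ : ℝ) * (-1 - Complex.I) by norm_num [mtet, Matrix.cons_val_two, Matrix.cons_val_three, Matrix.tail_cons, Matrix.vecHead, Matrix.vecTail]; push_cast; ring,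
    Complex.arg_real_mul _ (by positivity),
    exp_arg_mul_I' _ (by simp [Complex.ext_iff]),
    show ‖(-1 - Complex.I)‖ = Real.sqrt 2 by
      rw [Complex.norm_def, Complex.normSq_apply]; norm_num]
  ring

lemma hsq : Complex.exp ((bPhi (mtet 0) : ℂ) * Complex.I) ^ 2 = Complex.I := by
  rw [hE0, div_pow, show (1 + Complex.I) ^ 2 = 2 * Complex.I by
      rw [add_sq, Complex.I_sq]; ring,
    show ((Real.sqrt 2 : ℝ) : ℂ) ^ 2 = 2 by
      rw [sq]; exact_mod_cast Real.mul_self_sqrt (by norm_num : (0:ℝ) ≤ 2)]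
  ring

lemma hth1 : bTheta (mtet 1) = Real.pi - bTheta (mtet 0) := by
  unfold bTheta
  rw [show mtet 1 2 = -(mtet 0 2) by norm_num [mtet, Matrix.cons_val_two, Matrix.cons_val_three, Matrix.tail_cons, Matrix.vecHead, Matrix.vecTail]; ring, Real.arccos_neg]

lemma hth2 : bTheta (mtet 2) = Real.pi - bTheta (mtet 0) := by
  unfold bTheta
  rw [show mtet 2 2 = -(mtet 0 2) by norm_num [mtet, Matrix.cons_val_two, Matrix.cons_val_three, Matrix.tail_cons, Matrix.vecHead, Matrix.vecTail]; ring, Real.arccos_neg]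

lemma hth3 : bTheta (mtet 3) = bTheta (mtet 0) := by
  unfold bTheta
  rw [show mtet 3 2 = mtet 0 2 by norm_num [mtet, Matrix.cons_val_two, Matrix.cons_val_three, Matrix.tail_cons, Matrix.vecHead, Matrix.vecTail]]

lemma hc1 : Real.cos (bTheta (mtet 1) / 2) = Real.sin (bTheta (mtet 0) / 2) := by
  rw [hth1, show (Real.pi - bTheta (mtet 0)) / 2 = Real.pi / 2 - bTheta (mtet 0) / 2 by ring,
    Real.cos_pi_div_two_sub]

lemma hs1 : Real.sin (bTheta (mtet 1) / 2) = Real.cos (bTheta (mtet 0) / 2) := by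
  rw [hth1, show (Real.pi - bTheta (mtet 0)) / 2 = Real.pi / 2 - bTheta (mtet 0) / 2 by ring,
    Real.sin_pi_div_two_sub]

lemma hc2 : Real.cos (bTheta (mtet 2) / 2) = Real.sin (bTheta (mtet 0) / 2) := by
  rw [hth2, show (Real.pi - bTheta (mtet 0)) / 2 = Real.pi / 2 - bTheta (mtet 0) / 2 by ring,
    Real.cos_pi_div_two_sub]

lemma hs2 : Real.sin (bTheta (mtet 2) / 2) = Real.cos (bTheta (mtet 0) / 2) := by
  rw [hth2, show (Real.pi - bTheta (mtet 0)) / 2 = Real.pi / 2 - bTheta (mtet 0) / 2 by ring,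
    Real.sin_pi_div_two_sub]

lemma orbit0 : (Gtetra2elt 0).mulVec (ψEJM 0) = (1 : ℂ) • ψEJM 0 := by
  rw [show Gtetra2elt 0 = 1 by
      simp [Gtetra2elt, Matrix.one_kronecker_one],
    Matrix.one_mulVec, one_smul]

lemma orbit1 : (Gtetra2elt 1).mulVec (ψEJM 0) = (-Complex.I) • ψEJM 1 := by
  funext p
  fin_cases p <;>
    simp only [Fin.mk_zero, Fin.mk_one, Fin.isValue, Gtetra2elt, Matrix.mulVec, dotProduct,
      Fintype.sum_prod_type, Fin.sum_univ_two,
      Matrix.kroneckerMap_apply, X2, Z2, Matrix.mul_apply, ψEJM, tp, ketP, ketM,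
      Matrix.cons_val_zero, Matrix.cons_val_one, Matrix.head_cons, Matrix.cons_val_two,
      Matrix.cons_val_three, Matrix.cons_val_succ, Matrix.tail_cons, Matrix.vecHead, Matrix.vecTail, Function.comp,
      Matrix.cons_val', Matrix.empty_val', Matrix.cons_val_fin_one, Matrix.of_apply,
      Matrix.head_fin_const,
      Pi.add_apply, Pi.smul_apply, smul_eq_mul,
      hE1', hc1, hs1]
  · linear_combination (-(((((Real.sqrt 3 + 1) / (2 * Real.sqrt 2) : ℝ) : ℂ)) + ((((Real.sqrt 3 - 1) / (2 * Real.sqrt 2) : ℝ) : ℂ))) * ((Real.cos (bTheta (mtet 0) / 2) : ℂ)) * ((Real.sin (bTheta (mtet 0) / 2) : ℂ))) * hsq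
  · linear_combination ((Complex.exp ((bPhi (mtet 0) : ℂ) * Complex.I)) * (((((Real.sqrt 3 + 1) / (2 * Real.sqrt 2) : ℝ) : ℂ)) * ((Real.sin (bTheta (mtet 0) / 2) : ℂ))^2 - ((((Real.sqrt 3 - 1) / (2 * Real.sqrt 2) : ℝ) : ℂ)) * ((Real.cos (bTheta (mtet 0) / 2) : ℂ))^2)) * Complex.I_sq
  · linear_combination ((Complex.exp ((bPhi (mtet 0) : ℂ) * Complex.I)) * (((((Real.sqrt 3 - 1) / (2 * Real.sqrt 2) : ℝ) : ℂ)) * ((Real.sin (bTheta (mtet 0) / 2) : ℂ))^2 - ((((Real.sqrt 3 + 1) / (2 * Real.sqrt 2) : ℝ) : ℂ)) * ((Real.cos (bTheta (mtet 0) / 2) : ℂ))^2)) * Complex.I_sq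
  · linear_combination (-(((((Real.sqrt 3 + 1) / (2 * Real.sqrt 2) : ℝ) : ℂ)) + ((((Real.sqrt 3 - 1) / (2 * Real.sqrt 2) : ℝ) : ℂ))) * ((Real.cos (bTheta (mtet 0) / 2) : ℂ)) * ((Real.sin (bTheta (mtet 0) / 2) : ℂ)) * Complex.I^3) * hsq +
      ((((((Real.sqrt 3 + 1) / (2 * Real.sqrt 2) : ℝ) : ℂ)) + ((((Real.sqrt 3 - 1) / (2 * Real.sqrt 2) : ℝ) : ℂ))) * ((Real.cos (bTheta (mtet 0) / 2) : ℂ)) * ((Real.sin (bTheta (mtet 0) / 2) : ℂ)) * (1 - Complex.I^2)) * Complex.I_sq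

lemma orbit2 : (Gtetra2elt 2).mulVec (ψEJM 0) = (1 : ℂ) • ψEJM 3 := by
  funext p
  fin_cases p <;>
    simp only [Fin.mk_zero, Fin.mk_one, Fin.isValue, Gtetra2elt, Matrix.mulVec, dotProduct,
      Fintype.sum_prod_type, Fin.sum_univ_two,
      Matrix.kroneckerMap_apply, X2, Z2, Matrix.mul_apply, ψEJM, tp, ketP, ketM,
      Matrix.cons_val_zero, Matrix.cons_val_one, Matrix.head_cons, Matrix.cons_val_two,
      Matrix.cons_val_three, Matrix.cons_val_succ, Matrix.tail_cons, Matrix.vecHead, Matrix.vecTail, Function.comp,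
      Matrix.cons_val', Matrix.empty_val', Matrix.cons_val_fin_one, Matrix.of_apply,
      Matrix.head_fin_const,
      Pi.add_apply, Pi.smul_apply, smul_eq_mul,
      hE3', hth3] <;>
    ring

lemma orbit3 : (Gtetra2elt 3).mulVec (ψEJM 0) = (-Complex.I) • ψEJM 2 := by
  funext p
  fin_cases p <;>
    simp only [Fin.mk_zero, Fin.mk_one, Fin.isValue, Gtetra2elt, Matrix.mulVec, dotProduct,
      Fintype.sum_prod_type, Fin.sum_univ_two,
      Matrix.kroneckerMap_apply, X2, Z2, Matrix.mul_apply, ψEJM, tp, ketP, ketM,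
      Matrix.cons_val_zero, Matrix.cons_val_one, Matrix.head_cons, Matrix.cons_val_two,
      Matrix.cons_val_three, Matrix.cons_val_succ, Matrix.tail_cons, Matrix.vecHead, Matrix.vecTail, Function.comp,
      Matrix.cons_val', Matrix.empty_val', Matrix.cons_val_fin_one, Matrix.of_apply,
      Matrix.head_fin_const,
      Pi.add_apply, Pi.smul_apply, smul_eq_mul,
      hE2', hc2, hs2]
  · linear_combination (-(((((Real.sqrt 3 + 1) / (2 * Real.sqrt 2) : ℝ) : ℂ)) + ((((Real.sqrt 3 - 1) / (2 * Real.sqrt 2) : ℝ) : ℂ))) * ((Real.cos (bTheta (mtet 0) / 2) : ℂ)) * ((Real.sin (bTheta (mtet 0) / 2) : ℂ))) * hsq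
  · linear_combination (-(Complex.exp ((bPhi (mtet 0) : ℂ) * Complex.I)) * (((((Real.sqrt 3 + 1) / (2 * Real.sqrt 2) : ℝ) : ℂ)) * ((Real.sin (bTheta (mtet 0) / 2) : ℂ))^2 - ((((Real.sqrt 3 - 1) / (2 * Real.sqrt 2) : ℝ) : ℂ)) * ((Real.cos (bTheta (mtet 0) / 2) : ℂ))^2)) * Complex.I_sq
  · linear_combination ((Complex.exp ((bPhi (mtet 0) : ℂ) * Complex.I)) * (((((Real.sqrt 3 + 1) / (2 * Real.sqrt 2) : ℝ) : ℂ)) * ((Real.cos (bTheta (mtet 0) / 2) : ℂ))^2 - ((((Real.sqrt 3 - 1) / (2 * Real.sqrt 2) : ℝ) : ℂ)) * ((Real.sin (bTheta (mtet 0) / 2) : ℂ))^2)) * Complex.I_sq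
  · linear_combination (-(((((Real.sqrt 3 + 1) / (2 * Real.sqrt 2) : ℝ) : ℂ)) + ((((Real.sqrt 3 - 1) / (2 * Real.sqrt 2) : ℝ) : ℂ))) * ((Real.cos (bTheta (mtet 0) / 2) : ℂ)) * ((Real.sin (bTheta (mtet 0) / 2) : ℂ)) * Complex.I^3) * hsq +
      ((((((Real.sqrt 3 + 1) / (2 * Real.sqrt 2) : ℝ) : ℂ)) + ((((Real.sqrt 3 - 1) / (2 * Real.sqrt 2) : ℝ) : ℂ))) * ((Real.cos (bTheta (mtet 0) / 2) : ℂ)) * ((Real.sin (bTheta (mtet 0) / 2) : ℂ)) * (1 - Complex.I^2)) * Complex.I_sq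

/-- The EJM basis is the orbit of `ψ_1` under `G⁽²⁾_tetra` up to
global phases: each `U ∈ {I⊗I, X⊗X, Z⊗Z, (XZ)⊗(XZ)}` sends `ψ_1` to a unimodular
multiple of some `ψ_i`, and the assignment `U ↦ i` is a bijection. -/
theorem EJM_is_Gtetra_orbit :
    ∃ f : Fin 4 → Fin 4, Function.Bijective f ∧
      ∀ u : Fin 4, ∃ ω : ℂ, ‖ω‖ = 1 ∧
        (Gtetra2elt u).mulVec (ψEJM 0) = ω • ψEJM (f u) := by
  refine ⟨![0, 1, 3, 2], by decide, ?_⟩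
  intro u
  fin_cases u
  · exact ⟨1, by simp, orbit0⟩
  · exact ⟨-Complex.I, by simp, orbit1⟩
  · exact ⟨1, by simp, orbit2⟩
  · exact ⟨-Complex.I, by simp, orbit3⟩

end
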